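/- ∫_{−∞}^{∞} |R(x)|²·e^{−x²/(2·Y₂²)} dx ≥ √(2π)·Y₂·exp(|𝓜|/7). -/

import Mathlib

open Real Filter Finset MeasureTheory

/-- The resonator `R(x) = ∏_{λ ∈ 𝓜} (1 − e^{−λ/(2α)} e^{iλx})⁻¹`. -/
noncomputable def resonator (α : ℝ) (𝓜 : Finset ℝ) (x : ℝ) : ℂ :=
  ∏ l ∈ 𝓜, (1 - (Real.exp (-l / (2 * α)) : ℂ) * Complex.exp ((l * x : ℝ) * Complex.I))⁻¹

noncomputable def Ee (t x : ℝ) : ℂ := Complex.exp ((t * x : ℝ) * Complex.I)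

noncomputable def rr (α l : ℝ) : ℝ := Real.exp (-l / (2 * α))

noncomputable def zz (α l x : ℝ) : ℂ := ((rr α l : ℝ) : ℂ) * Ee l x

lemma resonator_eq (α : ℝ) (𝓜 : Finset ℝ) (x : ℝ) :
    resonator α 𝓜 x = ∏ l ∈ 𝓜, (1 - zz α l x)⁻¹ := rfl

lemma Ee_pow (t x : ℝ) (m : ℕ) : Ee t x ^ m = Ee ((m : ℝ) * t) x := by
  rw [Ee, Ee, ← Complex.exp_nat_mul]
  congr 1
  push_cast
  ring

lemma Ee_conj (t x : ℝ) : (starRingEnd ℂ) (Ee t x) = Ee (-t) x := by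
  rw [Ee, Ee, ← Complex.exp_conj]
  congr 1
  rw [map_mul, Complex.conj_ofReal, Complex.conj_I]
  push_cast
  ring

lemma Ee_re (a t x : ℝ) : (((a : ℝ) : ℂ) * Ee t x).re = a * Real.cos (t * x) := by
  rw [Ee, Complex.mul_re, Complex.ofReal_re, Complex.ofReal_im,
    Complex.exp_ofReal_mul_I_re, zero_mul, sub_zero]

lemma Ee_prod {γ : Type*} (s : Finset γ) (f : γ → ℝ) (x : ℝ) :
    ∏ i ∈ s, Ee (f i) x = Ee (∑ i ∈ s, f i) x := by
  calc ∏ i ∈ s, Ee (f i) x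
      = Complex.exp (∑ i ∈ s, ((f i * x : ℝ) : ℂ) * Complex.I) := (Complex.exp_sum _ _).symm
    _ = Ee (∑ i ∈ s, f i) x := by
        rw [Ee]
        congr 1
        push_cast
        rw [Finset.sum_mul, Finset.sum_mul]

lemma zz_pow (α l x : ℝ) (m : ℕ) :
    zz α l x ^ m = ((rr α l ^ m : ℝ) : ℂ) * Ee ((m : ℝ) * l) x := by
  rw [zz, mul_pow, Ee_pow, Complex.ofReal_pow]

lemma abs_zz (α l x : ℝ) : ‖zz α l x‖ = rr α l := by
  rw [zz, norm_mul, Ee, Complex.norm_exp_ofReal_mul_I, mul_one, Complex.norm_real, Real.norm_eq_abs,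
    abs_of_pos (show (0:ℝ) < rr α l from Real.exp_pos _)]

lemma cos_gauss (b t : ℝ) (hb : 0 < b) :
    ∫ x : ℝ, Real.cos (t * x) * Real.exp (-(b * x ^ 2)) =
      Real.sqrt (π / b) * Real.exp (-t ^ 2 / (4 * b)) := by
  have hbc : (0:ℝ) < ((b:ℂ)).re := by simpa using hb
  have key := fourierIntegral_gaussian (b := (b:ℂ)) hbc (t := (t:ℂ))
  have hint : Integrable (fun x : ℝ =>
      Complex.exp (Complex.I * t * x) * Complex.exp (-(b:ℂ) * x ^ 2)) := by
    have := integrable_cexp_quadratic (b := (b:ℂ)) hbc (Complex.I * t) 0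
    refine this.congr ?_
    filter_upwards with x
    rw [← Complex.exp_add]
    congr 1
    ring
  have hre := congrArg Complex.re key
  rw [show ((∫ (x : ℝ), Complex.exp (Complex.I * ↑t * ↑x) * Complex.exp (-↑b * ↑x ^ 2)).re : ℝ)
      = ∫ (x : ℝ), (Complex.exp (Complex.I * ↑t * ↑x) * Complex.exp (-↑b * ↑x ^ 2)).re from
    (_root_.integral_re hint).symm] at hre
  have lhs_eq : ∀ x : ℝ,
      (Complex.exp (Complex.I * t * x) * Complex.exp (-(b:ℂ) * x ^ 2)).re
      = Real.cos (t * x) * Real.exp (-(b * x ^ 2)) := by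
    intro x
    have h2 : Complex.I * (t:ℂ) * (x:ℂ) = ((t * x : ℝ) : ℂ) * Complex.I := by push_cast; ring
    rw [h2, show (-(b:ℂ) * (x:ℂ) ^ 2) = ((-(b * x ^ 2) : ℝ) : ℂ) by push_cast; ring,
      ← Complex.ofReal_exp, Complex.mul_re, Complex.ofReal_re, Complex.ofReal_im,
      Complex.exp_ofReal_mul_I_re, mul_zero, sub_zero]
  rw [MeasureTheory.integral_congr_ae (Filter.Eventually.of_forall lhs_eq)] at hre
  have h3 : ((π / b : ℂ)) ^ (1 / 2 : ℂ) = ((Real.sqrt (π / b) : ℝ) : ℂ) := by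
    rw [Real.sqrt_eq_rpow, show ((π / b : ℂ)) = (((π / b : ℝ)) : ℂ) by push_cast; ring,
      show (1 / 2 : ℂ) = ((1 / 2 : ℝ) : ℂ) by norm_num,
      ← Complex.ofReal_cpow (by positivity)]
  have h4 : Complex.exp (-(t:ℂ) ^ 2 / (4 * (b:ℂ))) = ((Real.exp (-t ^ 2 / (4 * b)) : ℝ) : ℂ) := by
    rw [Complex.ofReal_exp]; push_cast; ring_nf
  rw [h3, h4, ← Complex.ofReal_mul, Complex.ofReal_re] at hre
  exact hre

lemma exp_seventh_le : Real.exp (1 / 7 : ℝ) ≤ 1.1536 := by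
  have h7 : Real.exp (1 / 7 : ℝ) ^ 7 = Real.exp 1 := by
    rw [← Real.exp_nat_mul]; norm_num
  by_contra h
  push_neg at h
  have h1 : (1.1536 : ℝ) ^ 7 < Real.exp (1/7 : ℝ) ^ 7 := by
    apply pow_lt_pow_left₀ h (by norm_num)
    norm_num
  rw [h7] at h1
  have h2 := Real.exp_one_lt_d9
  have h3 : (2.7182818286 : ℝ) < (1.1536 : ℝ) ^ 7 := by norm_num
  linarith

lemma exp_neg_two_ge : (1353 / 10000 : ℝ) ≤ Real.exp (-2 : ℝ) := by
  have h2 : Real.exp (2 : ℝ) = Real.exp 1 ^ 2 := by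
    rw [← Real.exp_nat_mul]; norm_num
  have hub : Real.exp (2 : ℝ) ≤ 2.7182818286 ^ 2 := by
    rw [h2]
    have := Real.exp_one_lt_d9
    nlinarith [Real.exp_pos 1]
  have hle : Real.exp (2:ℝ) ≤ 10000 / 1353 := by nlinarith
  rw [Real.exp_neg]
  calc (1353 / 10000 : ℝ) = (10000 / 1353 : ℝ)⁻¹ := by norm_num
    _ ≤ (Real.exp (2:ℝ))⁻¹ := by
        apply inv_anti₀ (Real.exp_pos 2) hle

lemma exp_seven_ge : (1000 : ℝ) ≤ Real.exp (7 : ℝ) := by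
  have h7 : Real.exp (7 : ℝ) = Real.exp 1 ^ 7 := by
    rw [← Real.exp_nat_mul]; norm_num
  have := Real.exp_one_gt_d9
  rw [h7]
  calc (1000 : ℝ) ≤ (2.7182818283 : ℝ) ^ 7 := by norm_num
    _ ≤ Real.exp 1 ^ 7 := by
        apply pow_le_pow_left₀ (by norm_num) this.le

lemma per_factor (N : ℕ) (r : ℝ) (hrlow : Real.exp (-1 : ℝ) ≤ r) (hr1 : r < 1)
    (hsmall : r ^ (N + 1) ≤ 1 / 1000) :
    Real.exp (1 / 7 : ℝ) * (1 + r ^ (N + 1)) ^ 2 ≤ ∑ m ∈ Finset.range (N + 1), (r ^ 2) ^ m := by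
  have hr0 : 0 < r := lt_of_lt_of_le (Real.exp_pos _) hrlow
  set s : ℝ := r ^ (N + 1) with hs
  have hs0 : 0 < s := pow_pos hr0 _
  have hr2 : r ^ 2 < 1 := by nlinarith
  have hr2ne : r ^ 2 ≠ 1 := ne_of_lt hr2
  have hgeom : ∑ m ∈ Finset.range (N + 1), (r ^ 2) ^ m = (1 - s ^ 2) / (1 - r ^ 2) := by
    rw [geom_sum_eq hr2ne]
    rw [show (r ^ 2) ^ (N + 1) = s ^ 2 by rw [hs, ← pow_mul, ← pow_mul]; ring_nf]
    rw [div_eq_div_iff (by nlinarith) (by nlinarith)]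
    ring
  rw [hgeom, le_div_iff₀ (by nlinarith)]
  have he17 := exp_seventh_le
  have he2 : (1353 / 10000 : ℝ) ≤ r ^ 2 := by
    have : Real.exp (-1 : ℝ) ^ 2 = Real.exp (-2 : ℝ) := by
      rw [← Real.exp_nat_mul]; norm_num
    nlinarith [exp_neg_two_ge, Real.exp_pos (-1 : ℝ)]
  have hexp_pos := Real.exp_pos (1 / 7 : ℝ)
  have hA : (1 - r ^ 2) ≤ 8647 / 10000 := by linarith
  have hB : (1 + s) ^ 2 ≤ (1001 / 1000) ^ 2 := by nlinarith
  have hs2 : s ^ 2 ≤ 1 / 1000000 := by nlinarith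
  have step1 : Real.exp (1/7 : ℝ) * (1 + s) ^ 2 * (1 - r ^ 2)
      ≤ (1.1536 : ℝ) * ((1001 / 1000 : ℝ) ^ 2) * (8647 / 10000 : ℝ) := by
    have h1 : Real.exp (1/7 : ℝ) * (1 + s) ^ 2 ≤ (1.1536 : ℝ) * (1001 / 1000 : ℝ) ^ 2 :=
      mul_le_mul exp_seventh_le hB (by positivity) (by norm_num)
    apply mul_le_mul h1 hA (by nlinarith) (by positivity)
  nlinarith [step1]


noncomputable def gg (α : ℝ) (N : ℕ) (l x : ℝ) : ℂ := ∑ m ∈ Finset.range (N + 1), zz α l x ^ m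

noncomputable def TT (α : ℝ) (N : ℕ) (𝓜 : Finset ℝ) (x : ℝ) : ℂ := ∏ l ∈ 𝓜, gg α N l x

noncomputable def AA (α : ℝ) (𝓜 : Finset ℝ) (p : {y : ℝ // y ∈ 𝓜} → ℕ) : ℝ :=
  ∏ i : {y : ℝ // y ∈ 𝓜}, rr α (i : ℝ) ^ p i

noncomputable def mu (𝓜 : Finset ℝ) (p : {y : ℝ // y ∈ 𝓜} → ℕ) : ℝ :=
  ∑ i : {y : ℝ // y ∈ 𝓜}, (p i : ℝ) * (i : ℝ)

lemma Ee_mul (t s x : ℝ) : Ee t x * Ee s x = Ee (t + s) x := by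
  rw [Ee, Ee, Ee, ← Complex.exp_add]
  congr 1
  push_cast
  ring

lemma AA_pos (α : ℝ) (𝓜 : Finset ℝ) (p : {y : ℝ // y ∈ 𝓜} → ℕ) : 0 < AA α 𝓜 p :=
  Finset.prod_pos fun i _ => pow_pos (Real.exp_pos _) _

lemma TT_expand (α : ℝ) (N : ℕ) (𝓜 : Finset ℝ) (x : ℝ) :
    TT α N 𝓜 x = ∑ p ∈ Fintype.piFinset (fun _ : {y : ℝ // y ∈ 𝓜} => Finset.range (N + 1)),
      ((AA α 𝓜 p : ℝ) : ℂ) * Ee (mu 𝓜 p) x := by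
  rw [TT, ← Finset.prod_coe_sort 𝓜 (fun l => gg α N l x)]
  simp_rw [gg, zz_pow]
  rw [Finset.prod_univ_sum]
  apply Finset.sum_congr rfl
  intro p _
  rw [Finset.prod_mul_distrib, Ee_prod, ← Complex.ofReal_prod, AA, mu]

lemma abs_sq_eq (z : ℂ) : (‖z‖ : ℝ) ^ 2 = (z * (starRingEnd ℂ) z).re := by
  rw [Complex.mul_conj]
  simp [Complex.sq_norm]

lemma TT_abs_sq (α : ℝ) (N : ℕ) (𝓜 : Finset ℝ) (x : ℝ) :
    ‖TT α N 𝓜 x‖ ^ 2 =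
      ∑ pq ∈ (Fintype.piFinset (fun _ : {y : ℝ // y ∈ 𝓜} => Finset.range (N + 1))) ×ˢ
          (Fintype.piFinset (fun _ : {y : ℝ // y ∈ 𝓜} => Finset.range (N + 1))),
        AA α 𝓜 pq.1 * AA α 𝓜 pq.2 * Real.cos ((mu 𝓜 pq.1 - mu 𝓜 pq.2) * x) := by
  rw [abs_sq_eq, TT_expand]
  rw [Finset.sum_product]
  rw [map_sum, Finset.sum_mul_sum]
  rw [Complex.re_sum]
  apply Finset.sum_congr rfl
  intro p _
  rw [Complex.re_sum]
  apply Finset.sum_congr rfl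
  intro q _
  rw [map_mul, Ee_conj, Complex.conj_ofReal,
    show ((AA α 𝓜 p : ℝ) : ℂ) * Ee (mu 𝓜 p) x * (((AA α 𝓜 q : ℝ) : ℂ) * Ee (-(mu 𝓜 q)) x)
      = (((AA α 𝓜 p * AA α 𝓜 q : ℝ) : ℂ)) * (Ee (mu 𝓜 p) x * Ee (-(mu 𝓜 q)) x) by
        push_cast; ring,
    Ee_mul, Ee_re, ← sub_eq_add_neg]

lemma cos_w_integrable (b t : ℝ) (hb : 0 < b) :
    Integrable (fun x : ℝ => Real.cos (t * x) * Real.exp (-(b * x ^ 2))) := by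
  have hw : Integrable (fun x : ℝ => Real.exp (-(b * x ^ 2))) := by
    simpa [neg_mul] using integrable_exp_neg_mul_sq hb
  apply hw.mono'
  · apply Continuous.aestronglyMeasurable
    fun_prop
  · filter_upwards with x
    rw [Real.norm_eq_abs, abs_mul, abs_of_pos (Real.exp_pos _)]
    exact mul_le_of_le_one_left (Real.exp_pos _).le (Real.abs_cos_le_one _)

theorem core_bound (α Y₂ : ℝ) (hY₂ : 0 < Y₂) (𝓜 : Finset ℝ) (N : ℕ)
    (hr1 : ∀ l ∈ 𝓜, rr α l < 1) :
    Real.sqrt (2 * π) * Y₂ * ∏ l ∈ 𝓜, ∑ m ∈ Finset.range (N + 1), (rr α l ^ 2) ^ m ≤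
      (∏ l ∈ 𝓜, (1 + rr α l ^ (N + 1)) ^ 2) *
        ∫ x : ℝ, ‖resonator α 𝓜 x‖ ^ 2 * Real.exp (-x ^ 2 / (2 * Y₂ ^ 2)) := by
  classical
  set b : ℝ := (2 * Y₂ ^ 2)⁻¹ with hbdef
  have hb : 0 < b := by positivity
  have hw_eq : ∀ x : ℝ, Real.exp (-x ^ 2 / (2 * Y₂ ^ 2)) = Real.exp (-(b * x ^ 2)) := by
    intro x
    congr 1
    rw [hbdef]
    ring
  have intw : Integrable (fun x : ℝ => Real.exp (-(b * x ^ 2))) := by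
    simpa [neg_mul] using integrable_exp_neg_mul_sq hb
  set K := Fintype.piFinset (fun _ : {y : ℝ // y ∈ 𝓜} => Finset.range (N + 1)) with hK
  -- ingredient facts about the factors
  have hz_abs : ∀ l ∈ 𝓜, ∀ x : ℝ, ‖zz α l x‖ = rr α l := fun l _ x => abs_zz α l x
  have hfac_lb : ∀ l ∈ 𝓜, ∀ x : ℝ, 1 - rr α l ≤ ‖1 - zz α l x‖ := by
    intro l hl x
    have h1 : ‖(1 : ℂ)‖ - ‖zz α l x‖ ≤ ‖1 - zz α l x‖ := norm_sub_norm_le _ _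
    simpa [abs_zz] using h1
  have hr_pos : ∀ l : ℝ, 0 < rr α l := fun l => Real.exp_pos _
  have hfac_pos : ∀ l ∈ 𝓜, ∀ x : ℝ, 0 < ‖1 - zz α l x‖ := by
    intro l hl x
    have := hfac_lb l hl x
    have := hr1 l hl
    linarith
  have hfac_inv_le : ∀ l ∈ 𝓜, ∀ x : ℝ,
      ‖(1 - zz α l x)⁻¹‖ ≤ (1 - rr α l)⁻¹ := by
    intro l hl x
    rw [norm_inv]
    exact inv_anti₀ (by linarith [hr1 l hl]) (hfac_lb l hl x)
  -- pointwise domination of TT by resonator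
  have habsT : ∀ x : ℝ, ‖TT α N 𝓜 x‖ ≤
      (∏ l ∈ 𝓜, (1 + rr α l ^ (N + 1))) * ‖resonator α 𝓜 x‖ := by
    intro x
    rw [TT, resonator_eq, norm_prod, norm_prod, ← Finset.prod_mul_distrib]
    apply Finset.prod_le_prod (fun l _ => norm_nonneg _)
    intro l hl
    have hzne1 : zz α l x ≠ 1 := by
      intro h
      have := abs_zz α l x
      rw [h] at this
      simp at this
      linarith [hr1 l hl, this]
    rw [gg, geom_sum_eq hzne1, norm_div, norm_inv, div_eq_mul_inv,
      show ‖zz α l x - 1‖ = ‖1 - zz α l x‖ from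
        norm_sub_rev _ _]
    apply mul_le_mul_of_nonneg_right _ (inv_nonneg.2 (norm_nonneg _))
    calc ‖zz α l x ^ (N + 1) - 1‖
        ≤ ‖zz α l x ^ (N + 1)‖ + ‖(-1 : ℂ)‖ := by
          rw [sub_eq_add_neg]
          exact norm_add_le _ _
      _ = rr α l ^ (N + 1) + 1 := by rw [norm_pow, abs_zz]; simp
      _ = 1 + rr α l ^ (N + 1) := by ring
  -- continuity
  have contEe : ∀ t : ℝ, Continuous (fun x : ℝ => Ee t x) := by
    intro t
    unfold Ee
    fun_prop
  have contzz : ∀ l : ℝ, Continuous (fun x : ℝ => zz α l x) := by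
    intro l
    unfold zz
    exact continuous_const.mul (contEe l)
  have contR : Continuous (fun x : ℝ => resonator α 𝓜 x) := by
    simp only [resonator_eq]
    apply continuous_finset_prod
    intro l hl
    apply Continuous.inv₀ (continuous_const.sub (contzz l))
    intro x h
    simp only [Pi.sub_apply, sub_eq_zero] at h
    have h2 := congrArg norm h
    rw [abs_zz, norm_one] at h2
    linarith [hr1 l hl, h2.le]
  have contT : Continuous (fun x : ℝ => TT α N 𝓜 x) := by
    unfold TT gg
    apply continuous_finset_prod
    intro l _
    apply continuous_finset_sum
    intro m _
    exact (contzz l).pow m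
  -- bound on resonator
  have hRB : ∀ x : ℝ, ‖resonator α 𝓜 x‖ ≤ ∏ l ∈ 𝓜, (1 - rr α l)⁻¹ := by
    intro x
    rw [resonator_eq, norm_prod]
    exact Finset.prod_le_prod (fun l _ => norm_nonneg _) (fun l hl => hfac_inv_le l hl x)
  -- integrability
  have intR2w : Integrable (fun x : ℝ =>
      ‖resonator α 𝓜 x‖ ^ 2 * Real.exp (-(b * x ^ 2))) := by
    apply (intw.const_mul ((∏ l ∈ 𝓜, (1 - rr α l)⁻¹) ^ 2)).mono'
    · exact (((continuous_norm.comp contR).pow 2).mul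
        (by fun_prop : Continuous fun x : ℝ => Real.exp (-(b * x ^ 2)))).aestronglyMeasurable
    · filter_upwards with x
      rw [Real.norm_eq_abs, abs_of_nonneg (by positivity)]
      have h1 := hRB x
      have h2 : ‖resonator α 𝓜 x‖ ^ 2 ≤ (∏ l ∈ 𝓜, (1 - rr α l)⁻¹) ^ 2 :=
        pow_le_pow_left₀ (norm_nonneg _) h1 2
      exact mul_le_mul_of_nonneg_right h2 (Real.exp_pos _).le
  have intT2w : Integrable (fun x : ℝ =>
      ‖TT α N 𝓜 x‖ ^ 2 * Real.exp (-(b * x ^ 2))) := by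
    apply (intw.const_mul (((∏ l ∈ 𝓜, (1 + rr α l ^ (N + 1))) *
        (∏ l ∈ 𝓜, (1 - rr α l)⁻¹)) ^ 2)).mono'
    · exact (((continuous_norm.comp contT).pow 2).mul
        (by fun_prop : Continuous fun x : ℝ => Real.exp (-(b * x ^ 2)))).aestronglyMeasurable
    · filter_upwards with x
      rw [Real.norm_eq_abs, abs_of_nonneg
        (mul_nonneg (pow_nonneg (norm_nonneg _) _) (Real.exp_pos _).le)]
      have h1 : ‖TT α N 𝓜 x‖ ≤
          (∏ l ∈ 𝓜, (1 + rr α l ^ (N + 1))) * (∏ l ∈ 𝓜, (1 - rr α l)⁻¹) := by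
        refine (habsT x).trans ?_
        apply mul_le_mul_of_nonneg_left (hRB x)
        exact Finset.prod_nonneg fun l _ =>
          add_nonneg zero_le_one (pow_nonneg (hr_pos l).le _)
      have h2 := pow_le_pow_left₀ (norm_nonneg _) h1 2
      exact mul_le_mul_of_nonneg_right h2 (Real.exp_pos _).le
  -- the expansion of the integral of |T|^2 w
  have hTint : ∫ x : ℝ, ‖TT α N 𝓜 x‖ ^ 2 * Real.exp (-(b * x ^ 2)) =
      ∑ pq ∈ K ×ˢ K, AA α 𝓜 pq.1 * AA α 𝓜 pq.2 *
        (Real.sqrt (π / b) * Real.exp (-(mu 𝓜 pq.1 - mu 𝓜 pq.2) ^ 2 / (4 * b))) := by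
    have step1 : ∀ x : ℝ, ‖TT α N 𝓜 x‖ ^ 2 * Real.exp (-(b * x ^ 2)) =
        ∑ pq ∈ K ×ˢ K, AA α 𝓜 pq.1 * AA α 𝓜 pq.2 *
          (Real.cos ((mu 𝓜 pq.1 - mu 𝓜 pq.2) * x) * Real.exp (-(b * x ^ 2))) := by
      intro x
      rw [TT_abs_sq, Finset.sum_mul]
      apply Finset.sum_congr rfl
      intro pq _
      ring
    rw [MeasureTheory.integral_congr_ae (Filter.Eventually.of_forall step1)]
    rw [MeasureTheory.integral_finset_sum]
    · apply Finset.sum_congr rfl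
      intro pq _
      rw [MeasureTheory.integral_const_mul, cos_gauss _ _ hb]
    · intro pq _
      exact (cos_w_integrable b _ hb).const_mul _
  -- lower bound by the diagonal
  have hdiag : Real.sqrt (π / b) * ∑ p ∈ K, AA α 𝓜 p ^ 2 ≤
      ∑ pq ∈ K ×ˢ K, AA α 𝓜 pq.1 * AA α 𝓜 pq.2 *
        (Real.sqrt (π / b) * Real.exp (-(mu 𝓜 pq.1 - mu 𝓜 pq.2) ^ 2 / (4 * b))) := by
    have himg : Real.sqrt (π / b) * ∑ p ∈ K, AA α 𝓜 p ^ 2 =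
        ∑ pq ∈ K.image (fun p => (p, p)), AA α 𝓜 pq.1 * AA α 𝓜 pq.2 *
          (Real.sqrt (π / b) * Real.exp (-(mu 𝓜 pq.1 - mu 𝓜 pq.2) ^ 2 / (4 * b))) := by
      rw [Finset.sum_image (fun p _ q _ h => (Prod.ext_iff.1 h).1)]
      rw [Finset.mul_sum]
      apply Finset.sum_congr rfl
      intro p _
      simp [sub_self, pow_two]
      ring
    rw [himg]
    apply Finset.sum_le_sum_of_subset_of_nonneg
    · intro pq hpq
      rw [Finset.mem_image] at hpq
      obtain ⟨p, hp, rfl⟩ := hpq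
      exact Finset.mem_product.2 ⟨hp, hp⟩
    · intro pq _ _
      have := AA_pos α 𝓜 pq.1
      have := AA_pos α 𝓜 pq.2
      positivity
  -- diagonal sum identity
  have hdiag_eq : ∑ p ∈ K, AA α 𝓜 p ^ 2 =
      ∏ l ∈ 𝓜, ∑ m ∈ Finset.range (N + 1), (rr α l ^ 2) ^ m := by
    rw [← Finset.prod_coe_sort 𝓜 (fun l => ∑ m ∈ Finset.range (N + 1), (rr α l ^ 2) ^ m)]
    rw [Finset.prod_univ_sum]
    apply Finset.sum_congr rfl
    intro p _
    rw [AA, ← Finset.prod_pow]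
    exact Finset.prod_congr rfl fun i _ => by rw [← pow_mul, ← pow_mul, mul_comm]
  -- value of sqrt(π/b)
  have hsqrt : Real.sqrt (π / b) = Real.sqrt (2 * π) * Y₂ := by
    rw [hbdef, show π / (2 * Y₂ ^ 2)⁻¹ = 2 * π * Y₂ ^ 2 by field_simp,
      Real.sqrt_mul (by positivity), Real.sqrt_sq hY₂.le]
  -- compare integrals
  have hcomp : ∫ x : ℝ, ‖TT α N 𝓜 x‖ ^ 2 * Real.exp (-(b * x ^ 2)) ≤
      (∏ l ∈ 𝓜, (1 + rr α l ^ (N + 1))) ^ 2 *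
        ∫ x : ℝ, ‖resonator α 𝓜 x‖ ^ 2 * Real.exp (-(b * x ^ 2)) := by
    rw [← MeasureTheory.integral_const_mul]
    apply MeasureTheory.integral_mono intT2w (intR2w.const_mul _)
    intro x
    have h1 := habsT x
    have h2 : ‖TT α N 𝓜 x‖ ^ 2 ≤
        ((∏ l ∈ 𝓜, (1 + rr α l ^ (N + 1))) * ‖resonator α 𝓜 x‖) ^ 2 :=
      pow_le_pow_left₀ (norm_nonneg _) h1 2
    rw [mul_pow] at h2
    calc ‖TT α N 𝓜 x‖ ^ 2 * Real.exp (-(b * x ^ 2))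
        ≤ ((∏ l ∈ 𝓜, (1 + rr α l ^ (N + 1))) ^ 2 * ‖resonator α 𝓜 x‖ ^ 2) *
            Real.exp (-(b * x ^ 2)) := mul_le_mul_of_nonneg_right h2 (Real.exp_pos _).le
      _ = (∏ l ∈ 𝓜, (1 + rr α l ^ (N + 1))) ^ 2 *
            (‖resonator α 𝓜 x‖ ^ 2 * Real.exp (-(b * x ^ 2))) := by ring
  -- put everything together
  have hgoal_int : ∫ x : ℝ, ‖resonator α 𝓜 x‖ ^ 2 * Real.exp (-x ^ 2 / (2 * Y₂ ^ 2)) =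
      ∫ x : ℝ, ‖resonator α 𝓜 x‖ ^ 2 * Real.exp (-(b * x ^ 2)) := by
    apply MeasureTheory.integral_congr_ae
    filter_upwards with x
    rw [hw_eq]
  rw [hgoal_int, Finset.prod_pow]
  calc Real.sqrt (2 * π) * Y₂ * ∏ l ∈ 𝓜, ∑ m ∈ Finset.range (N + 1), (rr α l ^ 2) ^ m
      = Real.sqrt (π / b) * ∑ p ∈ K, AA α 𝓜 p ^ 2 := by rw [hsqrt, hdiag_eq]
    _ ≤ ∑ pq ∈ K ×ˢ K, AA α 𝓜 pq.1 * AA α 𝓜 pq.2 *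
          (Real.sqrt (π / b) * Real.exp (-(mu 𝓜 pq.1 - mu 𝓜 pq.2) ^ 2 / (4 * b))) := hdiag
    _ = ∫ x : ℝ, ‖TT α N 𝓜 x‖ ^ 2 * Real.exp (-(b * x ^ 2)) := hTint.symm
    _ ≤ (∏ l ∈ 𝓜, (1 + rr α l ^ (N + 1))) ^ 2 *
          ∫ x : ℝ, ‖resonator α 𝓜 x‖ ^ 2 * Real.exp (-(b * x ^ 2)) := hcomp

theorem resonator_mean_square_lower_bound (α C₁ Y₂ : ℝ) (hα : 0 < α)
    (hC₁ : 0 < C₁) (hC₁2 : C₁ < 2) (hY₂ : 0 < Y₂)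
    (𝓜 : Finset ℝ) (h𝓜 : ∀ l ∈ 𝓜, C₁ * α ≤ l ∧ l ≤ 2 * α)
    (hind : LinearIndependent ℚ (fun t : {y : ℝ // y ∈ 𝓜} => (t : ℝ))) :
    Real.sqrt (2 * Real.pi) * Y₂ * Real.exp ((𝓜.card : ℝ) / 7) ≤
      ∫ x : ℝ, ‖resonator α 𝓜 x‖ ^ 2 * Real.exp (-x ^ 2 / (2 * Y₂ ^ 2)) := by
  set N : ℕ := ⌈(14 : ℝ) / C₁⌉₊ with hN
  have hr_pos : ∀ l : ℝ, 0 < rr α l := fun l => Real.exp_pos _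
  have hr_low : ∀ l ∈ 𝓜, Real.exp (-1 : ℝ) ≤ rr α l := by
    intro l hl
    rw [rr]
    apply Real.exp_le_exp.2
    have h1 : l / (2 * α) ≤ 1 := by
      rw [div_le_one (by positivity)]
      linarith [(h𝓜 l hl).2]
    rw [neg_div]
    linarith
  have hr_hi : ∀ l ∈ 𝓜, rr α l ≤ Real.exp (-(C₁ / 2)) := by
    intro l hl
    rw [rr]
    apply Real.exp_le_exp.2
    have h1 : C₁ / 2 ≤ l / (2 * α) := by
      rw [div_le_div_iff₀ (by norm_num) (by positivity)]
      nlinarith [(h𝓜 l hl).1]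
    rw [neg_div]
    linarith
  have hr_lt1 : ∀ l ∈ 𝓜, rr α l < 1 := by
    intro l hl
    have h2 : Real.exp (-(C₁ / 2)) < Real.exp 0 := Real.exp_lt_exp.2 (by linarith)
    rw [Real.exp_zero] at h2
    linarith [hr_hi l hl]
  have hsmall : ∀ l ∈ 𝓜, rr α l ^ (N + 1) ≤ 1 / 1000 := by
    intro l hl
    have h1 : rr α l ^ (N + 1) ≤ Real.exp (-(C₁ / 2)) ^ (N + 1) :=
      pow_le_pow_left₀ (hr_pos l).le (hr_hi l hl) _
    have h2 : Real.exp (-(C₁ / 2)) ^ (N + 1) = Real.exp (((N + 1 : ℕ) : ℝ) * (-(C₁ / 2))) :=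
      (Real.exp_nat_mul _ _).symm
    have hceil : (14 : ℝ) / C₁ ≤ (N : ℝ) := Nat.le_ceil _
    have h3 : ((N + 1 : ℕ) : ℝ) * (-(C₁ / 2)) ≤ -7 := by
      have hid : (14 / C₁) * (C₁ / 2) = 7 := by field_simp; norm_num
      have h4 : (14 : ℝ) / C₁ ≤ ((N + 1 : ℕ) : ℝ) := by push_cast; linarith
      nlinarith [h4, hC₁]
    have h5 : Real.exp (((N + 1 : ℕ) : ℝ) * (-(C₁ / 2))) ≤ Real.exp (-7 : ℝ) :=
      Real.exp_le_exp.2 h3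
    have h6 : Real.exp (-7 : ℝ) ≤ 1 / 1000 := by
      rw [Real.exp_neg]
      calc (Real.exp 7)⁻¹ ≤ (1000 : ℝ)⁻¹ := inv_anti₀ (by norm_num) exp_seven_ge
        _ = 1 / 1000 := by norm_num
    rw [h2] at h1
    linarith
  have hfac : ∀ l ∈ 𝓜, Real.exp (1 / 7 : ℝ) * (1 + rr α l ^ (N + 1)) ^ 2 ≤
      ∑ m ∈ Finset.range (N + 1), (rr α l ^ 2) ^ m :=
    fun l hl => per_factor N (rr α l) (hr_low l hl) (hr_lt1 l hl) (hsmall l hl)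
  have hprod : Real.exp ((𝓜.card : ℝ) / 7) * ∏ l ∈ 𝓜, (1 + rr α l ^ (N + 1)) ^ 2 ≤
      ∏ l ∈ 𝓜, ∑ m ∈ Finset.range (N + 1), (rr α l ^ 2) ^ m := by
    have hexp : Real.exp ((𝓜.card : ℝ) / 7) = ∏ _l ∈ 𝓜, Real.exp (1 / 7 : ℝ) := by
      rw [Finset.prod_const, ← Real.exp_nat_mul]
      congr 1
      ring
    rw [hexp, ← Finset.prod_mul_distrib]
    apply Finset.prod_le_prod
    · intro l _
      positivity
    · exact hfac
  have hcore := core_bound α Y₂ hY₂ 𝓜 N hr_lt1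
  set I := ∫ x : ℝ, ‖resonator α 𝓜 x‖ ^ 2 * Real.exp (-x ^ 2 / (2 * Y₂ ^ 2)) with hI
  set P2 : ℝ := ∏ l ∈ 𝓜, (1 + rr α l ^ (N + 1)) ^ 2 with hP2
  have hP2pos : 0 < P2 :=
    Finset.prod_pos fun l _ => pow_pos (by nlinarith [pow_pos (hr_pos l) (N + 1)]) 2
  have hmain : Real.sqrt (2 * π) * Y₂ * (Real.exp ((𝓜.card : ℝ) / 7) * P2) ≤ P2 * I := by
    calc Real.sqrt (2 * π) * Y₂ * (Real.exp ((𝓜.card : ℝ) / 7) * P2)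
        ≤ Real.sqrt (2 * π) * Y₂ * ∏ l ∈ 𝓜, ∑ m ∈ Finset.range (N + 1), (rr α l ^ 2) ^ m := by
          apply mul_le_mul_of_nonneg_left hprod (by positivity)
      _ ≤ P2 * I := by
          rw [mul_assoc] at hcore
          rw [← mul_assoc] at hcore
          exact hcore
  apply le_of_mul_le_mul_right _ hP2pos
  calc Real.sqrt (2 * π) * Y₂ * Real.exp ((𝓜.card : ℝ) / 7) * P2
      = Real.sqrt (2 * π) * Y₂ * (Real.exp ((𝓜.card : ℝ) / 7) * P2) := by ring
    _ ≤ P2 * I := hmain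
    _ = I * P2 := by ring
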